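/- Let G be a group with identity e, let s ≥ 1, let S be a finite subset of G, and for each h ∈ S let A_h be an s×s complex matrix. Let W be a continuous linear operator on the Hilbert space ℓ²(G; ℂˢ) of square-summable ℂˢ-valued functions on G such that (Wψ)(x) = Σ_{h∈S} A_h · ψ(x·h) for every ψ ∈ ℓ²(G; ℂˢ) and x ∈ G. Then W is unitary if and only if for every g ∈ G: Σ_{(h,h') ∈ S×S, h·h'⁻¹ = g} A_h·A_{h'}ᴴ equals the identity matrix I_s if g = e and 0 otherwise, and Σ_{(h,h') ∈ S×S, h⁻¹·h' = g} A_hᴴ·A_{h'} equals I_s if g = e and 0 otherwise. -/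

import Mathlib

open Matrix
open scoped InnerProductSpace

section qw_aux
variable {G : Type*} [Group G] [DecidableEq G] {s : ℕ}

private lemma qw_sum_mulVec {α : Type*} (t : Finset α) (M : α → Matrix (Fin s) (Fin s) ℂ)
    (v : Fin s → ℂ) : (∑ i ∈ t, M i) *ᵥ v = ∑ i ∈ t, M i *ᵥ v := by
  ext j
  simp only [Matrix.mulVec, dotProduct, Finset.sum_apply, Matrix.sum_apply,
    Finset.sum_mul]
  rw [Finset.sum_comm]

private lemma qw_inner_mulVec (M : Matrix (Fin s) (Fin s) ℂ) (u v : EuclideanSpace ℂ (Fin s)) :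
    ⟪WithLp.toLp 2 (M *ᵥ u), v⟫_ℂ
      = ⟪u, WithLp.toLp 2 (Mᴴ *ᵥ v)⟫_ℂ := by
  simp only [PiLp.inner_apply, PiLp.toLp_apply, RCLike.inner_apply, Matrix.mulVec, dotProduct,
    Matrix.conjTranspose_apply, map_sum, _root_.map_mul, Finset.mul_sum, Finset.sum_mul]
  rw [Finset.sum_comm]
  apply Finset.sum_congr rfl
  intro i _
  apply Finset.sum_congr rfl
  intro j _
  simp [RingHomCompTriple.comp_apply, mul_comm, mul_left_comm]

private lemma qw_mat_ext {M N : Matrix (Fin s) (Fin s) ℂ}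
    (h : ∀ u : Fin s → ℂ, M *ᵥ u = N *ᵥ u) : M = N := by
  ext i j
  have := congrFun (h (Pi.single j 1)) i
  simpa using this

omit [Group G] in
private lemma qw_single_apply (x j : G) (u : EuclideanSpace ℂ (Fin s)) :
    (lp.single (E := fun _ : G => EuclideanSpace ℂ (Fin s)) 2 x u) j
      = if j = x then u else 0 := by
  rcases eq_or_ne j x with rfl | h
  · simp [lp.single_apply_self]
  · simp [lp.single_apply_ne _ _ _ h, h]

private lemma qw_adjoint_apply (S : Finset G) (A : G → Matrix (Fin s) (Fin s) ℂ)
    (W : lp (fun _ : G => EuclideanSpace ℂ (Fin s)) 2 →L[ℂ]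
         lp (fun _ : G => EuclideanSpace ℂ (Fin s)) 2)
    (hW : ∀ (ψ : lp (fun _ : G => EuclideanSpace ℂ (Fin s)) 2) (x : G),
      (W ψ) x = ∑ h ∈ S, (A h).mulVec ((ψ (x * h) : EuclideanSpace ℂ (Fin s))))
    (φ : lp (fun _ : G => EuclideanSpace ℂ (Fin s)) 2) (x : G) :
    (ContinuousLinearMap.adjoint W φ) x
      = ∑ h ∈ S, (A h)ᴴ *ᵥ ((φ (x * h⁻¹)) : EuclideanSpace ℂ (Fin s)) := by
  suffices H : (ContinuousLinearMap.adjoint W φ) x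
      = WithLp.toLp 2 (∑ h ∈ S, (A h)ᴴ *ᵥ ((φ (x * h⁻¹)) : EuclideanSpace ℂ (Fin s))) by
    rw [H]
  apply ext_inner_left ℂ
  intro u
  set σ := lp.single (E := fun _ : G => EuclideanSpace ℂ (Fin s)) 2 x u with hσ
  have hWσ : ∀ y : G, (W σ) y = ∑ h ∈ S, if y * h = x then
      WithLp.toLp 2 ((A h) *ᵥ u) else 0 := by
    intro y
    apply WithLp.ofLp_injective 2
    rw [hW, WithLp.ofLp_sum]
    apply Finset.sum_congr rfl
    intro h _
    rw [hσ, qw_single_apply]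
    split_ifs with hc
    · rfl
    · simp
  have hsupp : ∀ y ∉ S.image (fun h => x * h⁻¹),
      (⟪(W σ) y, (φ y : EuclideanSpace ℂ (Fin s))⟫_ℂ) = 0 := by
    intro y hy
    rw [hWσ]
    have : ∀ h ∈ S, ((if y * h = x then
        WithLp.toLp 2 ((A h) *ᵥ u) else 0)) = 0 := by
      intro h hh
      rw [if_neg]
      intro hc
      exact hy (Finset.mem_image.2 ⟨h, hh, by rw [← hc]; group⟩)
    rw [Finset.sum_congr rfl this]
    simp
  have key : ⟪u, ((ContinuousLinearMap.adjoint W φ :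
        lp (fun _ : G => EuclideanSpace ℂ (Fin s)) 2) x : EuclideanSpace ℂ (Fin s))⟫_ℂ
      = ∑ y ∈ S.image (fun h => x * h⁻¹),
          ⟪(W σ) y, (φ y : EuclideanSpace ℂ (Fin s))⟫_ℂ := by
    calc ⟪u, ((ContinuousLinearMap.adjoint W φ :
            lp (fun _ : G => EuclideanSpace ℂ (Fin s)) 2) x : EuclideanSpace ℂ (Fin s))⟫_ℂ
        = ⟪σ, ContinuousLinearMap.adjoint W φ⟫_ℂ :=
          (lp.inner_single_left (𝕜 := ℂ) (G := fun _ : G => EuclideanSpace ℂ (Fin s))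
            x u (ContinuousLinearMap.adjoint W φ)).symm
      _ = ⟪W σ, φ⟫_ℂ := ContinuousLinearMap.adjoint_inner_right W σ φ
      _ = ∑' y, ⟪(W σ) y, (φ y : EuclideanSpace ℂ (Fin s))⟫_ℂ :=
          lp.inner_eq_tsum (W σ) φ
      _ = _ := tsum_eq_sum hsupp
  rw [key]
  have step : ∑ y ∈ S.image (fun h => x * h⁻¹), ⟪(W σ) y, (φ y : EuclideanSpace ℂ (Fin s))⟫_ℂ
      = ∑ h ∈ S, ⟪WithLp.toLp 2 ((A h) *ᵥ u),
          (φ (x * h⁻¹) : EuclideanSpace ℂ (Fin s))⟫_ℂ := by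
    have : ∀ y ∈ S.image (fun h => x * h⁻¹),
        ⟪(W σ) y, (φ y : EuclideanSpace ℂ (Fin s))⟫_ℂ
        = ∑ h ∈ S, if y = x * h⁻¹ then
            ⟪WithLp.toLp 2 ((A h) *ᵥ u),
              (φ y : EuclideanSpace ℂ (Fin s))⟫_ℂ else 0 := by
      intro y _
      rw [hWσ, sum_inner]
      apply Finset.sum_congr rfl
      intro h _
      have hiff : (y * h = x) ↔ (y = x * h⁻¹) := by
        constructor <;> (intro hc; subst hc; group)
      split_ifs with h1 h2 h2
      · rfl
      · exact absurd (hiff.1 h1) h2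
      · exact absurd (hiff.2 h2) h1
      · simp
    rw [Finset.sum_congr rfl this, Finset.sum_comm]
    apply Finset.sum_congr rfl
    intro h hh
    rw [Finset.sum_ite_eq' (S.image (fun h => x * h⁻¹)) (x * h⁻¹)]
    rw [if_pos (Finset.mem_image.2 ⟨h, hh, rfl⟩)]
  rw [step, WithLp.toLp_sum, inner_sum]
  apply Finset.sum_congr rfl
  intro h _
  exact qw_inner_mulVec (A h) u (φ (x * h⁻¹))

/-- regrouping a finite sum over pairs using the unitarity condition -/
private lemma qw_regroup (hs : 1 ≤ s) (P : Finset (G × G)) (f : G × G → G)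
    (M : G × G → Matrix (Fin s) (Fin s) ℂ) (v : G → (Fin s → ℂ))
    (hcond : ∀ g : G, (∑ p ∈ P, if f p = g then M p else 0)
      = if g = 1 then (1 : Matrix (Fin s) (Fin s) ℂ) else 0) :
    ∑ p ∈ P, (M p) *ᵥ (v (f p)) = v 1 := by
  classical
  set T := P.image f with hT
  have h1T : (1 : G) ∈ T := by
    by_contra h1
    have hz : (∑ p ∈ P, if f p = (1:G) then M p else 0) = 0 := by
      apply Finset.sum_eq_zero
      intro p hp
      rw [if_neg]
      intro hc
      exact h1 (hT ▸ Finset.mem_image.2 ⟨p, hp, hc⟩)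
    rw [hcond 1, if_pos rfl] at hz
    have := congrFun (congrFun hz ⟨0, hs⟩) ⟨0, hs⟩
    simp [Matrix.one_apply] at this
  calc ∑ p ∈ P, (M p) *ᵥ (v (f p))
      = ∑ p ∈ P, ∑ g ∈ T, if f p = g then (M p) *ᵥ (v g) else 0 := by
        apply Finset.sum_congr rfl
        intro p hp
        rw [Finset.sum_ite_eq (T) (f p) (fun g => (M p) *ᵥ (v g))]
        rw [if_pos (hT ▸ Finset.mem_image.2 ⟨p, hp, rfl⟩)]
    _ = ∑ g ∈ T, ∑ p ∈ P, if f p = g then (M p) *ᵥ (v g) else 0 := Finset.sum_comm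
    _ = ∑ g ∈ T, (∑ p ∈ P, if f p = g then M p else 0) *ᵥ (v g) := by
        apply Finset.sum_congr rfl
        intro g _
        rw [qw_sum_mulVec]
        apply Finset.sum_congr rfl
        intro p _
        split_ifs
        · rfl
        · rw [Matrix.zero_mulVec]
    _ = ∑ g ∈ T, if g = 1 then v 1 else 0 := by
        apply Finset.sum_congr rfl
        intro g _
        rw [hcond g]
        split_ifs with h
        · subst h; rw [Matrix.one_mulVec]
        · rw [Matrix.zero_mulVec]
    _ = v 1 := by rw [Finset.sum_ite_eq' T (1 : G) (fun _ => v 1), if_pos h1T]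


private lemma qw_mulVec_sum {α : Type*} (t : Finset α) (M : Matrix (Fin s) (Fin s) ℂ)
    (v : α → Fin s → ℂ) : M *ᵥ (∑ i ∈ t, v i) = ∑ i ∈ t, M *ᵥ v i := by
  ext j
  simp only [Matrix.mulVec, dotProduct, Finset.sum_apply, Finset.mul_sum]
  rw [Finset.sum_comm]

end qw_aux

theorem qw_operator_unitary_iff
    {G : Type*} [Group G] [DecidableEq G] (s : ℕ) (hs : 1 ≤ s)
    (S : Finset G) (A : G → Matrix (Fin s) (Fin s) ℂ)
    (W : lp (fun _ : G => EuclideanSpace ℂ (Fin s)) 2 →L[ℂ]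
         lp (fun _ : G => EuclideanSpace ℂ (Fin s)) 2)
    (hW : ∀ (ψ : lp (fun _ : G => EuclideanSpace ℂ (Fin s)) 2) (x : G),
      (W ψ) x = ∑ h ∈ S, (A h).mulVec ((ψ (x * h) : EuclideanSpace ℂ (Fin s)))) :
    (Function.Surjective W ∧ ∀ ψ, ‖W ψ‖ = ‖ψ‖) ↔
      (∀ g : G,
        (∑ p ∈ S ×ˢ S, if p.1 * p.2⁻¹ = g then A p.1 * (A p.2)ᴴ else 0) =
          (if g = 1 then (1 : Matrix (Fin s) (Fin s) ℂ) else 0) ∧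
        (∑ p ∈ S ×ˢ S, if p.1⁻¹ * p.2 = g then (A p.1)ᴴ * A p.2 else 0) =
          (if g = 1 then (1 : Matrix (Fin s) (Fin s) ℂ) else 0)) := by
  classical
  set Wd := ContinuousLinearMap.adjoint W with hWd
  have hWdφ : ∀ (φ : lp (fun _ : G => EuclideanSpace ℂ (Fin s)) 2) (x : G),
      (Wd φ) x = ∑ h ∈ S, (A h)ᴴ *ᵥ ((φ (x * h⁻¹)) : EuclideanSpace ℂ (Fin s)) :=
    qw_adjoint_apply S A W hW
  -- pointwise formula for W† ∘ W
  have hWdW : ∀ (ψ : lp (fun _ : G => EuclideanSpace ℂ (Fin s)) 2) (x : G),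
      (Wd (W ψ)) x = ∑ p ∈ S ×ˢ S,
        ((A p.1)ᴴ * A p.2) *ᵥ ((ψ (x * (p.1⁻¹ * p.2))) : EuclideanSpace ℂ (Fin s)) := by
    intro ψ x
    rw [hWdφ, Finset.sum_product]
    apply Finset.sum_congr rfl
    intro h _
    rw [hW, qw_mulVec_sum]
    apply Finset.sum_congr rfl
    intro h2 _
    rw [Matrix.mulVec_mulVec, mul_assoc]
  -- pointwise formula for W ∘ W†
  have hWWd : ∀ (φ : lp (fun _ : G => EuclideanSpace ℂ (Fin s)) 2) (x : G),
      (W (Wd φ)) x = ∑ p ∈ S ×ˢ S,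
        (A p.1 * (A p.2)ᴴ) *ᵥ ((φ (x * (p.1 * p.2⁻¹))) : EuclideanSpace ℂ (Fin s)) := by
    intro φ x
    rw [hW, Finset.sum_product]
    apply Finset.sum_congr rfl
    intro h _
    rw [hWdφ, qw_mulVec_sum]
    apply Finset.sum_congr rfl
    intro h2 _
    rw [Matrix.mulVec_mulVec, mul_assoc]
  constructor
  · rintro ⟨hsurj, hiso⟩
    have hip : ∀ ψ φ, ⟪W ψ, W φ⟫_ℂ = ⟪ψ, φ⟫_ℂ :=
      (LinearMap.norm_map_iff_inner_map_map (𝕜 := ℂ) W).mp hiso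
    have hWdW1 : ∀ ψ, Wd (W ψ) = ψ := by
      intro ψ
      apply ext_inner_right ℂ
      intro φ
      rw [hWd, ContinuousLinearMap.adjoint_inner_left]
      exact hip ψ φ
    have hWWd1 : ∀ φ, W (Wd φ) = φ := by
      intro φ
      obtain ⟨ψ, rfl⟩ := hsurj φ
      rw [hWdW1]
    intro g
    constructor
    · apply qw_mat_ext
      intro u
      set σ := lp.single (E := fun _ : G => EuclideanSpace ℂ (Fin s)) 2 g
        (WithLp.toLp 2 u) with hσ
      calc (∑ p ∈ S ×ˢ S, if p.1 * p.2⁻¹ = g then A p.1 * (A p.2)ᴴ else 0) *ᵥ u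
          = ∑ p ∈ S ×ˢ S, (A p.1 * (A p.2)ᴴ) *ᵥ
              ((σ ((1 : G) * (p.1 * p.2⁻¹))) : EuclideanSpace ℂ (Fin s)) := by
            rw [qw_sum_mulVec]
            apply Finset.sum_congr rfl
            intro p _
            rw [hσ, qw_single_apply, one_mul]
            split_ifs with hc
            · rfl
            · rw [Matrix.zero_mulVec, WithLp.ofLp_zero, Matrix.mulVec_zero]
        _ = (W (Wd σ)) 1 := (hWWd σ 1).symm
        _ = (σ (1 : G) : EuclideanSpace ℂ (Fin s)) := by rw [hWWd1]
        _ = (if g = 1 then (1 : Matrix (Fin s) (Fin s) ℂ) else 0) *ᵥ u := by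
            rw [hσ, qw_single_apply]
            rcases eq_or_ne g 1 with rfl | hg
            · rw [if_pos rfl, if_pos rfl, Matrix.one_mulVec, WithLp.ofLp_toLp]
            · rw [if_neg (fun hc => hg hc.symm), if_neg hg, Matrix.zero_mulVec, WithLp.ofLp_zero]
    · apply qw_mat_ext
      intro u
      set σ := lp.single (E := fun _ : G => EuclideanSpace ℂ (Fin s)) 2 g
        (WithLp.toLp 2 u) with hσ
      calc (∑ p ∈ S ×ˢ S, if p.1⁻¹ * p.2 = g then (A p.1)ᴴ * A p.2 else 0) *ᵥ u
          = ∑ p ∈ S ×ˢ S, ((A p.1)ᴴ * A p.2) *ᵥ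
              ((σ ((1 : G) * (p.1⁻¹ * p.2))) : EuclideanSpace ℂ (Fin s)) := by
            rw [qw_sum_mulVec]
            apply Finset.sum_congr rfl
            intro p _
            rw [hσ, qw_single_apply, one_mul]
            split_ifs with hc
            · rfl
            · rw [Matrix.zero_mulVec, WithLp.ofLp_zero, Matrix.mulVec_zero]
        _ = (Wd (W σ)) 1 := (hWdW σ 1).symm
        _ = (σ (1 : G) : EuclideanSpace ℂ (Fin s)) := by rw [hWdW1]
        _ = (if g = 1 then (1 : Matrix (Fin s) (Fin s) ℂ) else 0) *ᵥ u := by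
            rw [hσ, qw_single_apply]
            rcases eq_or_ne g 1 with rfl | hg
            · rw [if_pos rfl, if_pos rfl, Matrix.one_mulVec, WithLp.ofLp_toLp]
            · rw [if_neg (fun hc => hg hc.symm), if_neg hg, Matrix.zero_mulVec, WithLp.ofLp_zero]
  · intro hC
    have hWdW1 : ∀ ψ, Wd (W ψ) = ψ := by
      intro ψ
      apply lp.ext
      funext x
      apply WithLp.ofLp_injective 2
      rw [hWdW ψ x]
      have := qw_regroup hs (S ×ˢ S) (fun p => p.1⁻¹ * p.2)
        (fun p => (A p.1)ᴴ * A p.2)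
        (fun g => (ψ (x * g) : EuclideanSpace ℂ (Fin s)))
        (fun g => (hC g).2)
      simpa using this
    have hWWd1 : ∀ φ, W (Wd φ) = φ := by
      intro φ
      apply lp.ext
      funext x
      apply WithLp.ofLp_injective 2
      rw [hWWd φ x]
      have := qw_regroup hs (S ×ˢ S) (fun p => p.1 * p.2⁻¹)
        (fun p => A p.1 * (A p.2)ᴴ)
        (fun g => (φ (x * g) : EuclideanSpace ℂ (Fin s)))
        (fun g => (hC g).1)
      simpa using this
    refine ⟨fun φ => ⟨Wd φ, hWWd1 φ⟩, fun ψ => ?_⟩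
    have h2 : ⟪W ψ, W ψ⟫_ℂ = ⟪ψ, ψ⟫_ℂ := by
      have h1 := ContinuousLinearMap.adjoint_inner_left W ψ (W ψ)
      rw [← hWd, hWdW1] at h1
      exact h1.symm
    rw [inner_self_eq_norm_sq_to_K, inner_self_eq_norm_sq_to_K] at h2
    have h3 : ‖W ψ‖ ^ 2 = ‖ψ‖ ^ 2 := by exact_mod_cast h2
    nlinarith [norm_nonneg (W ψ), norm_nonneg ψ]
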